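/- For any pre e: L_p(e^⋆) = L_p(e)·L(|e|)*, where ⋆ is the lifted Kleene star on pres. -/

import Mathlib

namespace PointedRE

inductive PItem (α : Type) : Type
  | empty : PItem α
  | eps : PItem α
  | ch : α → PItem α
  | pch : α → PItem α
  | plus : PItem α → PItem α → PItem α
  | cat : PItem α → PItem α → PItem α
  | star : PItem α → PItem α

namespace PItem

variable {α : Type}

/-- The carrier: erase all points. -/
def carrier : PItem α → RegularExpression α
  | empty => 0
  | eps => 1
  | ch a => RegularExpression.char a
  | pch a => RegularExpression.char a
  | plus e1 e2 => carrier e1 + carrier e2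
  | cat e1 e2 => carrier e1 * carrier e2
  | star e => (carrier e).star

/-- ε(b) : {ε} if b, ∅ otherwise. -/
def ebool (b : Bool) : Language α := if b then 1 else 0

/-- The pointed language of a pointed item. -/
def Lp : PItem α → Language α
  | empty => 0
  | eps => 0
  | ch _ => 0
  | pch a => {[a]}
  | plus e1 e2 => Lp e1 + Lp e2
  | cat e1 e2 => Lp e1 * (carrier e2).matches' + Lp e2
  | star e => Lp e * KStar.kstar (carrier e).matches'

/-- A pointed regular expression (pre): a pointed item with a trailing boolean. -/
abbrev Pre (α : Type) := PItem α × Bool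

/-- The pointed language of a pre. -/
def LpP (p : Pre α) : Language α := Lp p.1 + ebool p.2

/-- Broadcasting a point inside a pointed item. -/
def broadcast : PItem α → Pre α
  | empty => (empty, false)
  | eps => (eps, true)
  | ch a => (pch a, false)
  | pch a => (pch a, false)
  | plus e1 e2 =>
      (plus (broadcast e1).1 (broadcast e2).1, (broadcast e1).2 || (broadcast e2).2)
  | cat e1 e2 =>
      if (broadcast e1).2 then
        (cat (broadcast e1).1 (broadcast e2).1, (broadcast e2).2)
      else (cat (broadcast e1).1 e2, false)
  | star e => (star (broadcast e).1, true)

/-- Lifted sum on pres. -/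
def oplus (p1 p2 : Pre α) : Pre α := (plus p1.1 p2.1, p1.2 || p2.2)

/-- Lifted concatenation on pres. -/
def odot (p1 p2 : Pre α) : Pre α :=
  if p1.2 then (cat p1.1 (broadcast p2.1).1, p2.2 || (broadcast p2.1).2)
  else (cat p1.1 p2.1, p2.2)

/-- Lifted Kleene star on pres. -/
def ostar (p : Pre α) : Pre α :=
  if p.2 then (star (broadcast p.1).1, true) else (star p.1, false)

/-- Broadcasting extended to pres. -/
def broadcastP (p : Pre α) : Pre α :=
  ((broadcast p.1).1, p.2 || (broadcast p.1).2)

/-- The move operation on pointed items. -/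
def move [DecidableEq α] (a : α) : PItem α → Pre α
  | empty => (empty, false)
  | eps => (eps, false)
  | ch b => (ch b, false)
  | pch b => if b = a then (ch b, true) else (ch b, false)
  | plus e1 e2 => oplus (move a e1) (move a e2)
  | cat e1 e2 => odot (move a e1) (move a e2)
  | star e => ostar (move a e)

/-- The move operation iterated along a string (on pres, ignoring the trailing point). -/
def moves [DecidableEq α] : Pre α → List α → Pre α
  | p, [] => p
  | p, a :: w => moves (move a p.1) w

/-- Embedding of regular expressions as point-free pointed items. -/
def embed : RegularExpression α → PItem α
  | .zero => empty
  | .epsilon => eps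
  | .char a => ch a
  | .plus e1 e2 => plus (embed e1) (embed e2)
  | .comp e1 e2 => cat (embed e1) (embed e2)
  | .star e => star (embed e)

/-- Read-back of a pointed item as a set of regular expressions. -/
def R : PItem α → Set (RegularExpression α)
  | empty => ∅
  | eps => ∅
  | ch _ => ∅
  | pch a => {RegularExpression.char a}
  | plus e1 e2 => R e1 ∪ R e2
  | cat e1 e2 => (fun r => r * carrier e2) '' R e1 ∪ R e2
  | star e => (fun r => r * (carrier e).star) '' R e

/-- Read-back of a pre. -/
def RP (p : Pre α) : Set (RegularExpression α) :=
  R p.1 ∪ (if p.2 then {1} else ∅)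

/-- The language of a set of regular expressions. -/
def LS (S : Set (RegularExpression α)) : Language α :=
  {w | ∃ r ∈ S, w ∈ r.matches'}

/-- The look-ahead normal form of a regular expression (without ε). -/
def nf : RegularExpression α → Set (RegularExpression α)
  | .zero => ∅
  | .epsilon => ∅
  | .char a => {RegularExpression.char a}
  | .plus e1 e2 => nf e1 ∪ nf e2
  | .comp e1 e2 =>
      if e1.matchEpsilon then (fun r => r * e2) '' nf e1 ∪ nf e2
      else (fun r => r * e2) '' nf e1
  | .star e => (fun r => r * e.star) '' nf e

/-- The look-ahead normal form with ε added when the expression is nullable. -/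
def nfe (e : RegularExpression α) : Set (RegularExpression α) :=
  nf e ∪ (if e.matchEpsilon then {1} else ∅)

/-- nf_ε lifted to sets of regular expressions. -/
def nfeS (S : Set (RegularExpression α)) : Set (RegularExpression α) :=
  ⋃ r ∈ S, nfe r

/-- Merge of two pointed items (meaningful when they share the same carrier). -/
def merge : PItem α → PItem α → PItem α
  | ch a, pch _ => pch a
  | plus e1 e2, plus f1 f2 => plus (merge e1 f1) (merge e2 f2)
  | cat e1 e2, cat f1 f2 => cat (merge e1 f1) (merge e2 f2)
  | star e, star f => star (merge e f)
  | e, _ => e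

/-- Merge extended to pres. -/
def mergeP (p q : Pre α) : Pre α := (merge p.1 q.1, p.2 || q.2)

end PItem
end PointedRE

open PointedRE PItem

section Aux

open Language

variable {α : Type}

/-- The nonempty words of a language. -/
def posL (L : Language α) : Language α := {w | w ∈ L ∧ w ≠ []}

lemma mem_posL {L : Language α} {w : List α} : w ∈ posL L ↔ w ∈ L ∧ w ≠ [] := Iff.rfl

lemma posL_add (L M : Language α) : posL (L + M) = posL L + posL M := by
  ext w; simp only [mem_posL, Language.mem_add]; tauto

@[simp] lemma posL_zero : posL (0 : Language α) = 0 := by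
  ext w; simp [mem_posL]

@[simp] lemma posL_one : posL (1 : Language α) = 0 := by
  ext w; simp only [mem_posL, Language.mem_one]
  constructor
  · rintro ⟨rfl, h⟩; exact absurd rfl h
  · intro h; exact absurd h (Set.notMem_empty w)

@[simp] lemma posL_char (a : α) : posL ({[a]} : Language α) = {[a]} := by
  ext w
  simp only [mem_posL, Set.mem_singleton_iff]
  constructor
  · rintro ⟨rfl, _⟩; rfl
  · rintro rfl; exact ⟨rfl, by simp⟩

lemma posL_mul_of_nil {L M : Language α} (h : [] ∈ L) :
    posL (L * M) = posL L * M + posL M := by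
  ext w
  simp only [mem_posL, Language.mem_add, Language.mem_mul]
  constructor
  · rintro ⟨⟨u, hu, v, hv, rfl⟩, hne⟩
    rcases eq_or_ne u [] with rfl | hu0
    · exact Or.inr ⟨hv, by simpa using hne⟩
    · exact Or.inl ⟨u, ⟨hu, hu0⟩, v, hv, rfl⟩
  · rintro (⟨u, ⟨hu, hu0⟩, v, hv, rfl⟩ | ⟨hw, hne⟩)
    · exact ⟨⟨u, hu, v, hv, rfl⟩, by simp [hu0]⟩
    · exact ⟨⟨[], h, w, hw, rfl⟩, hne⟩

lemma posL_mul_of_not_nil {L M : Language α} (h : [] ∉ L) :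
    posL (L * M) = posL L * M := by
  ext w
  simp only [mem_posL, Language.mem_mul]
  constructor
  · rintro ⟨⟨u, hu, v, hv, rfl⟩, hne⟩
    exact ⟨u, ⟨hu, fun h0 => h (h0 ▸ hu)⟩, v, hv, rfl⟩
  · rintro ⟨u, ⟨hu, hu0⟩, v, hv, rfl⟩
    exact ⟨⟨u, hu, v, hv, rfl⟩, by simp [hu0]⟩

lemma posL_kstar (L : Language α) : posL (KStar.kstar L) = posL L * KStar.kstar L := by
  ext w
  constructor
  · rintro ⟨hw, hne⟩
    rw [Language.mem_kstar_iff_exists_nonempty] at hw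
    obtain ⟨S, rfl, hS⟩ := hw
    cases S with
    | nil => simp at hne
    | cons u T =>
        have hu := hS u List.mem_cons_self
        have hT : T.flatten ∈ KStar.kstar L :=
          Language.join_mem_kstar (fun y hy => (hS y (List.mem_cons_of_mem _ hy)).1)
        exact Language.append_mem_mul ⟨hu.1, hu.2⟩ hT
  · rintro ⟨u, ⟨hu, hu0⟩, v, hv, rfl⟩
    refine ⟨?_, by simp [hu0]⟩
    obtain ⟨S, rfl, hS⟩ := hv
    refine ⟨u :: S, rfl, ?_⟩
    intro y hy
    rcases List.mem_cons.mp hy with rfl | hy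
    · exact hu
    · exact hS y hy

lemma kstar_eq_posL (L : Language α) : KStar.kstar L = posL L * KStar.kstar L + 1 := by
  rw [← posL_kstar]
  ext w
  by_cases h : w = [] <;>
    simp [mem_posL, Language.mem_add, Language.mem_one, h, Language.nil_mem_kstar]

lemma nil_mem_mul_iff {L M : Language α} : [] ∈ L * M ↔ [] ∈ L ∧ [] ∈ M := by
  simp only [Language.mem_mul, List.append_eq_nil_iff]
  constructor
  · rintro ⟨u, hu, v, hv, hu0, hv0⟩; subst hu0; subst hv0; exact ⟨hu, hv⟩
  · rintro ⟨h1, h2⟩; exact ⟨[], h1, [], h2, rfl, rfl⟩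

lemma carrier_broadcast (e : PItem α) : carrier (broadcast e).1 = carrier e := by
  induction e with
  | empty => rfl
  | eps => rfl
  | ch a => rfl
  | pch a => rfl
  | plus e1 e2 ih1 ih2 => simp [broadcast, carrier, ih1, ih2]
  | cat e1 e2 ih1 ih2 =>
      by_cases h : (broadcast e1).2 <;> simp [broadcast, h, carrier, ih1, ih2]
  | star e ih => simp [broadcast, carrier, ih]

lemma broadcast_snd (e : PItem α) :
    (broadcast e).2 = true ↔ [] ∈ (carrier e).matches' := by
  induction e with
  | empty => simp [broadcast, carrier, RegularExpression.matches']
  | eps => simp [broadcast, carrier, RegularExpression.matches']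
  | ch a =>
      simp only [broadcast, carrier, RegularExpression.matches'_char, Bool.false_eq_true,
        false_iff, Set.mem_singleton_iff]
      exact fun h => List.cons_ne_nil a [] (show ([] : List α) = [a] from h).symm
  | pch a =>
      simp only [broadcast, carrier, RegularExpression.matches'_char, Bool.false_eq_true,
        false_iff, Set.mem_singleton_iff]
      exact fun h => List.cons_ne_nil a [] (show ([] : List α) = [a] from h).symm
  | plus e1 e2 ih1 ih2 =>
      simp [broadcast, carrier, RegularExpression.matches', ← ih1, ← ih2, Language.mem_add]
  | cat e1 e2 ih1 ih2 =>
      by_cases h : (broadcast e1).2 <;>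
        simp [broadcast, h, carrier, RegularExpression.matches', nil_mem_mul_iff,
          ← ih1, ← ih2, h]
  | star e ih => simp [broadcast, carrier, RegularExpression.matches', Language.nil_mem_kstar]

lemma Lp_broadcast (e : PItem α) :
    Lp (broadcast e).1 = Lp e + posL (carrier e).matches' := by
  induction e with
  | empty => simp [broadcast, Lp, carrier, RegularExpression.matches']
  | eps => simp [broadcast, Lp, carrier, RegularExpression.matches']
  | ch a => simp [broadcast, Lp, carrier, RegularExpression.matches']
  | pch a => simp [broadcast, Lp, carrier, RegularExpression.matches']
  | plus e1 e2 ih1 ih2 =>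
      simp only [broadcast, Lp, carrier, RegularExpression.matches', ih1, ih2, posL_add]
      abel
  | cat e1 e2 ih1 ih2 =>
      by_cases h : (broadcast e1).2
      · have h1 : [] ∈ (carrier e1).matches' := (broadcast_snd e1).1 h
        simp only [broadcast, h, if_true, Lp, carrier, RegularExpression.matches',
          carrier_broadcast, ih1, ih2, posL_mul_of_nil h1, add_mul]
        abel
      · have h1 : [] ∉ (carrier e1).matches' := fun hh => h ((broadcast_snd e1).2 hh)
        simp only [broadcast, h, Bool.false_eq_true, ↓reduceIte, Lp, carrier, RegularExpression.matches',
          carrier_broadcast, ih1, posL_mul_of_not_nil h1, add_mul]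
        abel
  | star e ih =>
      simp only [broadcast, Lp, carrier, RegularExpression.matches',
        carrier_broadcast, ih, posL_kstar, add_mul]

end Aux

/-- L_p(e^⋆) = L_p(e)·L(|e|)*. -/
theorem stmt5 {α : Type} (p : Pre α) :
    LpP (ostar p) = LpP p * KStar.kstar (carrier p.1).matches' := by
  obtain ⟨e, b⟩ := p
  cases b
  · simp [ostar, LpP, Lp, ebool]
  · show Lp (PItem.star (broadcast e).1) + ebool true
      = (Lp e + ebool true) * KStar.kstar (carrier e).matches'
    simp only [Lp, ebool, if_true, carrier_broadcast, Lp_broadcast, add_mul, one_mul]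
    rw [add_assoc, ← kstar_eq_posL]
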